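/- arXiv:2006.02131 — 3 statements merged into one kernel-verified Lean document; each statement's English description precedes it below -/
import Mathlib

section
/- Let t0 ∈ ℝ and σ > 0. Let f : ℝ → ℝ be continuous with f(s) > 0 for all s > 0. Let α : ℝ → ℝ be continuous with α(t) ≥ 0 for all t ≥ t0, and let ξ : ℝ → ℝ be continuous with ξ(t) > 0 for all t ≥ t0 and such that (sup_{s ∈ [σ, 2σ]} f(s)) · ∫_{t0}^{∞} ξ(t) dt < σ. If v : ℝ → ℝ is differentiable on [t0, ∞) with v(t0) = 2σ and v'(t) = α(t) f(v(t)) − ξ(t) f(v(t)) for all t ≥ t0, then v(t) > σ for all t ≥ t0. -/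
open MeasureTheory Set

/-- Lower bound (24): the solution of the perturbed separable ODE
`v' = (α(t) − ξ(t)) f(v)`, `v(t0) = 2σ`, stays above `σ`, provided
`(sup_{[σ,2σ]} f) · ∫_{t0}^∞ ξ < σ`. -/
theorem stmt0 (t0 σ : ℝ) (hσ : 0 < σ)
    (f : ℝ → ℝ) (hf : Continuous f) (hfpos : ∀ s : ℝ, 0 < s → 0 < f s)
    (α : ℝ → ℝ) (hα : Continuous α) (hαnn : ∀ t : ℝ, t0 ≤ t → 0 ≤ α t)
    (ξ : ℝ → ℝ) (hξ : Continuous ξ) (hξpos : ∀ t : ℝ, t0 ≤ t → 0 < ξ t)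
    (hξint : IntegrableOn ξ (Ici t0))
    (hsmall : sSup (f '' Icc σ (2 * σ)) * ∫ t in Ici t0, ξ t < σ)
    (v : ℝ → ℝ) (hv0 : v t0 = 2 * σ)
    (hv : ∀ t : ℝ, t0 ≤ t → HasDerivAt v (α t * f (v t) - ξ t * f (v t)) t) :
    ∀ t : ℝ, t0 ≤ t → σ < v t := by
  set M : ℝ := sSup (f '' Icc σ (2 * σ)) with hM
  set I : ℝ := ∫ t in Ici t0, ξ t with hI
  have hvc : ∀ s : ℝ, t0 ≤ s → ContinuousAt v s := fun s hs => (hv s hs).continuousAt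
  have hMb : BddAbove (f '' Icc σ (2 * σ)) :=
    (isCompact_Icc.image hf).bddAbove
  have hMle : ∀ s ∈ Icc σ (2 * σ), f s ≤ M := fun s hs => le_csSup hMb ⟨s, hs, rfl⟩
  have hσ2 : σ ≤ 2 * σ := by linarith
  have hM0 : 0 < M := lt_of_lt_of_le (hfpos σ hσ) (hMle σ ⟨le_refl σ, hσ2⟩)
  by_contra h
  push_neg at h
  obtain ⟨t, ht0, hvt⟩ := h
  -- first hitting time of level σ
  set A : Set ℝ := Icc t0 t ∩ {s | v s ≤ σ} with hA
  have hAne : A.Nonempty := ⟨t, ⟨ht0, le_refl t⟩, hvt⟩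
  have hAbd : BddBelow A := ⟨t0, fun s hs => hs.1.1⟩
  set T : ℝ := sInf A with hT
  have hT0 : t0 ≤ T := le_csInf hAne fun s hs => hs.1.1
  have hTt : T ≤ t := csInf_le hAbd ⟨⟨ht0, le_refl t⟩, hvt⟩
  have hTcl : T ∈ closure A := csInf_mem_closure hAne hAbd
  have hvTle : v T ≤ σ := by
    haveI hnb : (nhdsWithin T A).NeBot := mem_closure_iff_nhdsWithin_neBot.1 hTcl
    refine le_of_tendsto
      (((hvc T hT0).continuousWithinAt : ContinuousWithinAt v A T)) ?_
    filter_upwards [eventually_mem_nhdsWithin] with s hs using hs.2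
  have hgt : ∀ s : ℝ, t0 ≤ s → s < T → σ < v s := by
    intro s hs hsT
    by_contra hle
    push_neg at hle
    exact absurd (csInf_le hAbd ⟨⟨hs, hsT.le.trans hTt⟩, hle⟩) (not_le.2 hsT)
  -- last time at level 2σ before T
  set B : Set ℝ := Icc t0 T ∩ {s | 2 * σ ≤ v s} with hB
  have hBne : B.Nonempty := ⟨t0, ⟨le_refl t0, hT0⟩, hv0.ge⟩
  have hBbd : BddAbove B := ⟨T, fun s hs => hs.1.2⟩
  set t1 : ℝ := sSup B with ht1
  have ht10 : t0 ≤ t1 := le_csSup hBbd ⟨⟨le_refl t0, hT0⟩, hv0.ge⟩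
  have ht1T : t1 ≤ T := csSup_le hBne fun s hs => hs.1.2
  have ht1cl : t1 ∈ closure B := csSup_mem_closure hBne hBbd
  have hvt1ge : 2 * σ ≤ v t1 := by
    haveI hnb : (nhdsWithin t1 B).NeBot := mem_closure_iff_nhdsWithin_neBot.1 ht1cl
    refine ge_of_tendsto
      (((hvc t1 ht10).continuousWithinAt : ContinuousWithinAt v B t1)) ?_
    filter_upwards [eventually_mem_nhdsWithin] with s hs using hs.2
  have ht1ltT : t1 < T := by
    rcases lt_or_eq_of_le ht1T with h' | h'
    · exact h'
    · exfalso; rw [h'] at hvt1ge; linarith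
  have hlt2 : ∀ s : ℝ, t1 < s → s ≤ T → v s < 2 * σ := by
    intro s hs hsT
    by_contra hle
    push_neg at hle
    exact absurd (le_csSup hBbd ⟨⟨ht10.trans hs.le, hsT⟩, hle⟩) (not_le.2 hs)
  have hvt1le : v t1 ≤ 2 * σ := by
    by_contra hgt2
    push_neg at hgt2
    have hev : ∀ᶠ s in nhdsWithin t1 (Ioi t1), 2 * σ < v s :=
      ((hvc t1 ht10).eventually (eventually_gt_nhds hgt2)).filter_mono
        nhdsWithin_le_nhds
    have hev2 : ∀ᶠ s in nhdsWithin t1 (Ioi t1), s ∈ Ioo t1 T :=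
      Ioo_mem_nhdsGT_of_mem ⟨le_refl t1, ht1ltT⟩
    obtain ⟨s, hs1, hs2⟩ := (hev.and hev2).exists
    exact absurd (le_csSup hBbd ⟨⟨ht10.trans hs2.1.le, hs2.2.le⟩, hs1.le⟩)
      (not_le.2 hs2.1)
  have hvt1 : v t1 = 2 * σ := le_antisymm hvt1le hvt1ge
  -- v T ≥ σ
  have hvTge : σ ≤ v T := by
    refine ge_of_tendsto
      (((hvc T hT0).continuousWithinAt : ContinuousWithinAt v (Iio T) T)) ?_
    have hev : ∀ᶠ s in nhdsWithin T (Iio T), s ∈ Ioo t1 T :=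
      Ioo_mem_nhdsLT_of_mem ⟨ht1ltT, le_refl T⟩
    filter_upwards [hev] with s hs
    exact (hgt s (ht10.trans hs.1.le) hs.2).le
  -- v stays in [σ, 2σ] on [t1, T]
  have hrange : ∀ s ∈ Icc t1 T, v s ∈ Icc σ (2 * σ) := by
    intro s hs
    constructor
    · rcases lt_or_eq_of_le hs.2 with h' | h'
      · exact (hgt s (ht10.trans hs.1) h').le
      · rw [h']; exact hvTge
    · rcases lt_or_eq_of_le hs.1 with h' | h'
      · exact (hlt2 s h' hs.2).le
      · rw [← h']; exact hvt1le
  -- FTC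
  have hcv : ContinuousOn v (Icc t1 T) := fun s hs =>
    (hvc s (ht10.trans hs.1)).continuousWithinAt
  set g : ℝ → ℝ := fun s => α s * f (v s) - ξ s * f (v s) with hg
  have hgcont : ContinuousOn g (Icc t1 T) :=
    ((hα.continuousOn.mul (hf.comp_continuousOn hcv)).sub
      (hξ.continuousOn.mul (hf.comp_continuousOn hcv)))
  have hgint : IntervalIntegrable g volume t1 T := by
    apply ContinuousOn.intervalIntegrable
    rwa [uIcc_of_le ht1ltT.le]
  have hftc : ∫ s in t1..T, g s = v T - v t1 := by
    apply intervalIntegral.integral_eq_sub_of_hasDerivAt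
    · intro s hs
      rw [uIcc_of_le ht1ltT.le] at hs
      exact hv s (ht10.trans hs.1)
    · exact hgint
  -- pointwise lower bound on g
  have hbound : ∀ s ∈ Icc t1 T, -(M * ξ s) ≤ g s := by
    intro s hs
    have hs0 : t0 ≤ s := ht10.trans hs.1
    have hvr := hrange s hs
    have hfv0 : 0 ≤ f (v s) := (hfpos (v s) (hσ.trans_le hvr.1)).le
    have hfvM : f (v s) ≤ M := hMle (v s) hvr
    have h1 : 0 ≤ α s * f (v s) := mul_nonneg (hαnn s hs0) hfv0
    have h2 : ξ s * f (v s) ≤ ξ s * M := by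
      exact mul_le_mul_of_nonneg_left hfvM (hξpos s hs0).le
    have : ξ s * M = M * ξ s := mul_comm _ _
    simp only [hg]
    nlinarith
  have hintM : IntervalIntegrable (fun s => -(M * ξ s)) volume t1 T :=
    ((continuous_const.mul hξ).neg).intervalIntegrable t1 T
  have hmono : ∫ s in t1..T, -(M * ξ s) ≤ ∫ s in t1..T, g s :=
    intervalIntegral.integral_mono_on ht1ltT.le hintM hgint hbound
  have hval : ∫ s in t1..T, -(M * ξ s) = -(M * ∫ s in t1..T, ξ s) := by
    rw [intervalIntegral.integral_neg, intervalIntegral.integral_const_mul]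
  -- compare ∫_{t1}^T ξ with I
  have hξnn : 0 ≤ᵐ[volume.restrict (Ici t0)] ξ :=
    (ae_restrict_iff' measurableSet_Ici).2 (Filter.Eventually.of_forall
      fun s hs => (hξpos s hs).le)
  have hsub : Ioc t1 T ⊆ Ici t0 := fun s hs => ht10.trans hs.1.le
  have hcmp : ∫ s in t1..T, ξ s ≤ I := by
    rw [intervalIntegral.integral_of_le ht1ltT.le, hI]
    exact setIntegral_mono_set hξint hξnn hsub.eventuallyLE
  have hIbound : -(M * I) ≤ ∫ s in t1..T, -(M * ξ s) := by
    rw [hval]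
    have := mul_le_mul_of_nonneg_left hcmp hM0.le
    linarith
  have hfinal : -(M * I) ≤ v T - v t1 := by
    rw [← hftc]; exact hIbound.trans hmono
  rw [hvt1] at hfinal
  linarith
end

section
/- Let t0 ∈ ℝ and σ > 0. Let f : ℝ → ℝ be continuous with f(s) > 0 for all s > 0 and ∫_{a}^{∞} ds / f(s) < ∞ for some (equivalently every) a > 0. Let α : ℝ → ℝ be continuous with α(t) ≥ 0 for all t ≥ t0 and ∫_{t0}^{∞} α(t) dt = ∞. Let ξ : ℝ → ℝ be continuous with ξ(t) > 0 for all t ≥ t0 and (sup_{s ∈ [σ, 2σ]} f(s)) · ∫_{t0}^{∞} ξ(t) dt < σ. Then there exists no function v : ℝ → ℝ that is differentiable on all of [t0, ∞) and satisfies v(t0) = 2σ and v'(t) = α(t) f(v(t)) − ξ(t) f(v(t)) for all t ≥ t0; i.e., every solution of this initial value problem blows up in finite time. -/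
open MeasureTheory Set

/-- Core ODE blow-up assertion for the auxiliary problem (23): when
`∫^∞ ds/f(s) < ∞`, `∫_{t0}^∞ α = ∞` and the perturbation `ξ` is small
(`(sup_{[σ,2σ]} f) ∫_{t0}^∞ ξ < σ`), the solution of
`v' = (α(t) − ξ(t)) f(v)`, `v(t0) = 2σ` cannot exist globally in time. -/
theorem stmt2 (t0 σ : ℝ) (hσ : 0 < σ)
    (f : ℝ → ℝ) (hf : Continuous f) (hfpos : ∀ s : ℝ, 0 < s → 0 < f s)
    (hfint : ∃ a : ℝ, 0 < a ∧ IntegrableOn (fun s => (f s)⁻¹) (Ioi a))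
    (α : ℝ → ℝ) (hα : Continuous α) (hαnn : ∀ t : ℝ, t0 ≤ t → 0 ≤ α t)
    (hαdiv : Filter.Tendsto (fun T => ∫ t in t0..T, α t) Filter.atTop Filter.atTop)
    (ξ : ℝ → ℝ) (hξ : Continuous ξ) (hξpos : ∀ t : ℝ, t0 ≤ t → 0 < ξ t)
    (hξint : IntegrableOn ξ (Ici t0))
    (hsmall : sSup (f '' Icc σ (2 * σ)) * ∫ t in Ici t0, ξ t < σ) :
    ¬ ∃ v : ℝ → ℝ, v t0 = 2 * σ ∧
        ∀ t : ℝ, t0 ≤ t → HasDerivAt v (α t * f (v t) - ξ t * f (v t)) t := by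
  rintro ⟨v, hv0, hv⟩
  set M := sSup (f '' Icc σ (2 * σ)) with hM
  set I := ∫ t in Ici t0, ξ t with hI
  have hξnn : ∀ t, t0 ≤ t → 0 ≤ ξ t := fun t ht => (hξpos t ht).le
  have hvc : ∀ t, t0 ≤ t → ContinuousAt v t := fun t ht => (hv t ht).continuousAt
  have hbdd : BddAbove (f '' Icc σ (2 * σ)) := (isCompact_Icc.image hf).bddAbove
  have hMle : ∀ x, x ∈ Icc σ (2 * σ) → f x ≤ M := fun x hx => le_csSup hbdd ⟨x, hx, rfl⟩
  have hMpos : 0 < M :=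
    lt_of_lt_of_le (hfpos σ hσ) (hMle σ ⟨le_refl σ, by linarith⟩)
  have hInn : 0 ≤ I :=
    setIntegral_nonneg measurableSet_Ici (fun t ht => hξnn t ht)
  -- bound for interval integrals of ξ
  have hξIle : ∀ a b : ℝ, t0 ≤ a → a ≤ b → (∫ t in a..b, ξ t) ≤ I := by
    intro a b ha hab
    rw [intervalIntegral.integral_of_le hab]
    apply setIntegral_mono_set hξint
    · filter_upwards [ae_restrict_mem measurableSet_Ici] with t ht using hξnn t ht
    · apply HasSubset.Subset.eventuallyLE
      intro t ht
      exact le_trans ha ht.1.le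
  -- Step 1: v stays above σ
  have hstep : ∀ t, t0 ≤ t → σ < v t := by
    by_contra hcon
    push_neg at hcon
    obtain ⟨t1, ht1, hvt1⟩ := hcon
    have hvcont1 : ContinuousOn v (Icc t0 t1) := fun t ht => (hvc t ht.1).continuousWithinAt
    set S : Set ℝ := Icc t0 t1 ∩ v ⁻¹' Iic σ with hSdef
    have hSne : S.Nonempty := ⟨t1, ⟨ht1, le_refl t1⟩, hvt1⟩
    have hSclosed : IsClosed S :=
      hvcont1.preimage_isClosed_of_isClosed isClosed_Icc isClosed_Iic
    have hSbdd : BddBelow S := (bddBelow_Icc).mono inter_subset_left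
    set t1' := sInf S with ht1'def
    have h1 : t1' ∈ S := hSclosed.csInf_mem hSne hSbdd
    have ht0t1' : t0 ≤ t1' := h1.1.1
    have hlow : ∀ t, t0 ≤ t → t < t1' → σ < v t := by
      intro t ht htl
      by_contra hle
      push_neg at hle
      exact absurd (csInf_le hSbdd ⟨⟨ht, htl.le.trans h1.1.2⟩, hle⟩) (not_le.mpr htl)
    have hvt1' : v t1' = σ := by
      have hvle : v t1' ≤ σ := h1.2
      rcases lt_or_eq_of_le hvle with hlt | heq
      · exfalso
        have ht0lt : t0 < t1' := by
          rcases eq_or_lt_of_le ht0t1' with he | hl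
          · exfalso; rw [← he] at hlt; rw [hv0] at hlt; linarith
          · exact hl
        have hev : ∀ᶠ t in nhds t1', v t < σ :=
          Filter.Tendsto.eventually_lt_const hlt (hvc t1' ht0t1')
        obtain ⟨ε, hε, hball⟩ := Metric.eventually_nhds_iff.mp hev
        set t := max t0 (t1' - ε / 2) with htdef
        have htlt : t < t1' := max_lt ht0lt (by linarith)
        have htd : dist t t1' < ε := by
          rw [Real.dist_eq, abs_sub_lt_iff]
          constructor
          · linarith
          · have : t1' - ε / 2 ≤ t := le_max_right _ _
            linarith
        have htS : t ∈ S := ⟨⟨le_max_left _ _, htlt.le.trans h1.1.2⟩, (hball htd).le⟩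
        exact absurd (csInf_le hSbdd htS) (not_le.mpr htlt)
      · exact heq
    -- last time v ≥ 2σ before t1'
    set T2 : Set ℝ := Icc t0 t1' ∩ v ⁻¹' Ici (2 * σ) with hT2def
    have hT2ne : T2.Nonempty := ⟨t0, ⟨le_refl t0, ht0t1'⟩, by rw [mem_preimage, hv0]; exact Set.self_mem_Ici⟩
    have hvcont2 : ContinuousOn v (Icc t0 t1') := fun t ht => (hvc t ht.1).continuousWithinAt
    have hT2closed : IsClosed T2 :=
      hvcont2.preimage_isClosed_of_isClosed isClosed_Icc isClosed_Ici
    have hT2bdd : BddAbove T2 := (bddAbove_Icc).mono inter_subset_left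
    set t2 := sSup T2 with ht2def
    have h2 : t2 ∈ T2 := hT2closed.csSup_mem hT2ne hT2bdd
    have ht0t2 : t0 ≤ t2 := h2.1.1
    have h2σle : 2 * σ ≤ v t2 := h2.2
    have ht2lt : t2 < t1' := by
      rcases eq_or_lt_of_le h2.1.2 with he | hl
      · exfalso; rw [he, hvt1'] at h2σle; linarith
      · exact hl
    have hup : ∀ t, t2 < t → t ≤ t1' → v t < 2 * σ := by
      intro t ht2t htt1
      by_contra hge
      push_neg at hge
      exact absurd (le_csSup hT2bdd ⟨⟨ht0t2.trans ht2t.le, htt1⟩, hge⟩) (not_le.mpr ht2t)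
    have hv2 : v t2 = 2 * σ := by
      rcases lt_or_eq_of_le h2σle with hlt | heq
      · exfalso
        have hev : ∀ᶠ t in nhds t2, 2 * σ < v t :=
          Filter.Tendsto.eventually_const_lt hlt (hvc t2 ht0t2)
        obtain ⟨ε, hε, hball⟩ := Metric.eventually_nhds_iff.mp hev
        set t := min t1' (t2 + ε / 2) with htdef
        have htgt : t2 < t := lt_min ht2lt (by linarith)
        have htd : dist t t2 < ε := by
          rw [Real.dist_eq, abs_sub_lt_iff]
          constructor
          · have : t ≤ t2 + ε / 2 := min_le_right _ _
            linarith
          · linarith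
        have htT : t ∈ T2 := ⟨⟨ht0t2.trans htgt.le, min_le_left _ _⟩, (hball htd).le⟩
        exact absurd (le_csSup hT2bdd htT) (not_le.mpr htgt)
      · exact heq.symm
    -- on [t2, t1'], σ ≤ v ≤ 2σ
    have hrange : ∀ t, t ∈ Icc t2 t1' → v t ∈ Icc σ (2 * σ) := by
      intro t ht
      constructor
      · rcases eq_or_lt_of_le ht.2 with he | hl
        · rw [he, hvt1']
        · exact (hlow t (ht0t2.trans ht.1) hl).le
      · rcases eq_or_lt_of_le ht.1 with he | hl
        · rw [← he, hv2]
        · exact (hup t hl ht.2).le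
    -- FTC on [t2, t1']
    have hvcont3 : ContinuousOn v (uIcc t2 t1') := by
      rw [uIcc_of_le ht2lt.le]
      exact fun t ht => (hvc t (ht0t2.trans ht.1)).continuousWithinAt
    have hintcont : ContinuousOn (fun t => α t * f (v t) - ξ t * f (v t)) (uIcc t2 t1') :=
      ((hα.continuousOn.mul (hf.comp_continuousOn hvcont3)).sub
        (hξ.continuousOn.mul (hf.comp_continuousOn hvcont3)))
    have hftc : ∫ t in t2..t1', (α t * f (v t) - ξ t * f (v t)) = v t1' - v t2 := by
      apply intervalIntegral.integral_eq_sub_of_hasDerivAt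
      · intro t ht
        rw [uIcc_of_le ht2lt.le] at ht
        exact hv t (ht0t2.trans ht.1)
      · exact hintcont.intervalIntegrable
    have hmono : (-M) * ∫ t in t2..t1', ξ t ≤ ∫ t in t2..t1', (α t * f (v t) - ξ t * f (v t)) := by
      rw [← intervalIntegral.integral_const_mul]
      apply intervalIntegral.integral_mono_on ht2lt.le
      · exact (continuous_const.mul hξ).intervalIntegrable _ _
      · exact hintcont.intervalIntegrable
      · intro t ht
        have ht0t : t0 ≤ t := ht0t2.trans ht.1
        have hvr := hrange t ht
        have hfv : 0 < f (v t) := hfpos _ (lt_of_lt_of_le hσ hvr.1)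
        have h1 : 0 ≤ α t * f (v t) := mul_nonneg (hαnn t ht0t) hfv.le
        have h2 : ξ t * f (v t) ≤ ξ t * M :=
          mul_le_mul_of_nonneg_left (hMle _ hvr) (hξnn t ht0t)
        nlinarith
    have hξb : (∫ t in t2..t1', ξ t) ≤ I := hξIle t2 t1' ht0t2 ht2lt.le
    have : v t1' - v t2 ≥ -M * I := by
      rw [← hftc] at *
      have : -M * I ≤ -M * ∫ t in t2..t1', ξ t := by nlinarith
      linarith
    rw [hvt1', hv2] at this
    nlinarith
  -- Step 2: integrate 1/f
  obtain ⟨a, ha, hfa⟩ := hfint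
  have hfinv_cont : ContinuousOn (fun s => (f s)⁻¹) (Ioi 0) :=
    ContinuousOn.inv₀ hf.continuousOn (fun s hs => (hfpos s hs).ne')
  have hIoi : IntegrableOn (fun s => (f s)⁻¹) (Ioi σ) := by
    rcases le_total a σ with h | h
    · exact hfa.mono_set (Ioi_subset_Ioi h)
    · have h1 : IntegrableOn (fun s => (f s)⁻¹) (Ioc σ a) := by
        have : ContinuousOn (fun s => (f s)⁻¹) (Icc σ a) :=
          hfinv_cont.mono (fun s hs => lt_of_lt_of_le hσ hs.1)
        exact this.integrableOn_Icc.mono_set Ioc_subset_Icc_self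
      rw [← Ioc_union_Ioi_eq_Ioi h]
      exact h1.union hfa
  set B := ∫ s in Ioi σ, (f s)⁻¹ with hBdef
  set G : ℝ → ℝ := fun u => ∫ s in σ..u, (f s)⁻¹ with hGdef
  have hGderiv : ∀ x, σ < x → HasDerivAt G (f x)⁻¹ x := by
    intro x hx
    apply intervalIntegral.integral_hasDerivAt_right
    · apply ContinuousOn.intervalIntegrable
      apply hfinv_cont.mono
      intro s hs
      rw [uIcc_of_le hx.le] at hs
      exact lt_of_lt_of_le hσ hs.1
    · exact ((hf.measurable.inv).stronglyMeasurable).stronglyMeasurableAtFilter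
    · exact hf.continuousAt.inv₀ (hfpos x (hσ.trans hx)).ne'
  have hGB : ∀ x, σ ≤ x → G x ≤ B := by
    intro x hx
    show (∫ s in σ..x, (f s)⁻¹) ≤ B
    rw [intervalIntegral.integral_of_le hx]
    apply setIntegral_mono_set hIoi
    · filter_upwards [ae_restrict_mem measurableSet_Ioi] with s hs using
        (inv_nonneg.mpr (hfpos s (hσ.trans hs)).le)
    · exact Ioc_subset_Ioi_self.eventuallyLE
  have hwftc : ∀ T, t0 ≤ T → ∫ t in t0..T, (α t - ξ t) = G (v T) - G (v t0) := by
    intro T hT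
    apply intervalIntegral.integral_eq_sub_of_hasDerivAt
    · intro t ht
      rw [uIcc_of_le hT] at ht
      have ht0 : t0 ≤ t := ht.1
      have hσv : σ < v t := hstep t ht0
      have hfv : f (v t) ≠ 0 := (hfpos _ (hσ.trans hσv)).ne'
      have hcomp := (hGderiv (v t) hσv).comp t (hv t ht0)
      have heq : (f (v t))⁻¹ * (α t * f (v t) - ξ t * f (v t)) = α t - ξ t := by
        field_simp
      rw [heq] at hcomp
      exact hcomp
    · exact (hα.sub hξ).intervalIntegrable _ _
  -- derive contradiction with divergence
  have hbound : ∀ T, t0 ≤ T → (∫ t in t0..T, α t) ≤ B - G (2 * σ) + I := by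
    intro T hT
    have hsub : ∫ t in t0..T, (α t - ξ t) = (∫ t in t0..T, α t) - ∫ t in t0..T, ξ t :=
      intervalIntegral.integral_sub (hα.intervalIntegrable _ _) (hξ.intervalIntegrable _ _)
    have h1 := hwftc T hT
    rw [hsub, hv0] at h1
    have h2 : G (v T) ≤ B := hGB _ (hstep T hT).le
    have h3 : (∫ t in t0..T, ξ t) ≤ I := hξIle t0 T (le_refl t0) hT
    linarith
  obtain ⟨T, hT1, hT2⟩ :=
    ((hαdiv.eventually_gt_atTop (B - G (2 * σ) + I)).and (Filter.eventually_ge_atTop t0)).exists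
  exact absurd (hbound T hT2) (not_le.mpr hT1)
end

section
/- Let a > 0, ε > 0, and Y ≥ 1 with εY < a. Let f : ℝ → ℝ be continuous, positive and nondecreasing on (0, a]. Let α, η : ℝ → ℝ be continuous with α(t) ≥ 0 and η(t) > 0 for t ≥ 0, ∫_{0}^{∞} (α(t) + η(t)) dt < ∞, and ∫_{εY}^{a} ds / f(s) > Y ∫_{0}^{∞} (α(t) + η(t)) dt. Then there exists a function z : ℝ → ℝ, differentiable on [0, ∞), such that z(0) = 1; ∫_{εY}^{εY z(t)} ds / f(s) = Y ∫_{0}^{t} (α(τ) + η(τ)) dτ for all t ≥ 0; z'(t) = (1/ε) (α(t) + η(t)) f(εY z(t)) for all t ≥ 0; and 1 ≤ z(t) and εY z(t) < a for all t ≥ 0. -/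
open MeasureTheory Set Filter

set_option maxHeartbeats 800000

/-- Construction of the time factor `z(t)` of the supersolution in Theorem 3.1:
`z` solves `z' = (1/ε)(α + η) f(εYz)`, `z(0) = 1`, satisfies the implicit
identity `∫_{εY}^{εYz(t)} ds/f(s) = Y ∫_0^t (α + η)`, and `εYz(t)` stays
strictly below `a` while `z(t) ≥ 1` for all `t ≥ 0`. -/
theorem stmt9 (a ε Y : ℝ) (ha : 0 < a) (hε : 0 < ε) (hY : 1 ≤ Y) (hεY : ε * Y < a)
    (f : ℝ → ℝ) (hf : ContinuousOn f (Ioc 0 a))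
    (hfpos : ∀ s ∈ Ioc (0:ℝ) a, 0 < f s)
    (hfmono : ∀ s1 s2 : ℝ, s1 ∈ Ioc (0:ℝ) a → s2 ∈ Ioc (0:ℝ) a → s1 ≤ s2 → f s1 ≤ f s2)
    (α η : ℝ → ℝ) (hα : Continuous α) (hη : Continuous η)
    (hαnn : ∀ t : ℝ, 0 ≤ t → 0 ≤ α t) (hηpos : ∀ t : ℝ, 0 ≤ t → 0 < η t)
    (hint : IntegrableOn (fun t => α t + η t) (Ioi 0))
    (hsmall : Y * ∫ t in Ioi (0:ℝ), (α t + η t) < ∫ s in (ε * Y)..a, (f s)⁻¹) :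
    ∃ z : ℝ → ℝ, z 0 = 1 ∧
      (∀ t : ℝ, 0 ≤ t →
        ∫ s in (ε * Y)..(ε * Y * z t), (f s)⁻¹ = Y * ∫ τ in (0:ℝ)..t, (α τ + η τ)) ∧
      (∀ t : ℝ, 0 ≤ t → HasDerivAt z ((1 / ε) * (α t + η t) * f (ε * Y * z t)) t) ∧
      (∀ t : ℝ, 0 ≤ t → 1 ≤ z t ∧ ε * Y * z t < a) := by
  have hY0 : 0 < Y := lt_of_lt_of_le one_pos hY
  set c := ε * Y with hcdef
  have hc0 : 0 < c := mul_pos hε hY0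
  have hca : c < a := hεY
  -- clamp to [c, a]
  set φ : ℝ → ℝ := fun s => min (max s c) a with hφdef
  have hφcont : Continuous φ := (continuous_id.max continuous_const).min continuous_const
  have hφmem : ∀ s, φ s ∈ Icc c a := fun s => ⟨le_min (le_max_right _ _) hca.le, min_le_right _ _⟩
  have hφIoc : ∀ s, φ s ∈ Ioc (0:ℝ) a := fun s => ⟨lt_of_lt_of_le hc0 (hφmem s).1, (hφmem s).2⟩
  have hφid : ∀ s ∈ Icc c a, φ s = s := fun s hs => by
    simp [hφdef, max_eq_left hs.1, min_eq_left hs.2]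
  set g : ℝ → ℝ := fun s => (f (φ s))⁻¹ with hgdef
  have hgcont : Continuous g := by
    have h1 : Continuous fun s => f (φ s) := hf.comp_continuous hφcont hφIoc
    exact h1.inv₀ fun s => (hfpos _ (hφIoc s)).ne'
  have hgpos : ∀ s, 0 < g s := fun s => inv_pos.2 (hfpos _ (hφIoc s))
  -- positive lower bound for g
  obtain ⟨s₀, hs₀mem, hs₀⟩ := isCompact_Icc.exists_isMinOn (nonempty_Icc.2 hca.le)
    (hgcont.continuousOn : ContinuousOn g (Icc c a))
  set m := g s₀ with hmdef
  have hm0 : 0 < m := hgpos s₀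
  have hmle : ∀ s, m ≤ g s := by
    intro s
    have h1 := hs₀ (hφmem s)
    have hφφ : φ (φ s) = φ s := hφid _ (hφmem s)
    simpa [hgdef, hφφ] using h1
  -- F
  set F : ℝ → ℝ := fun x => ∫ s in c..x, g s with hFdef
  have hFderiv : ∀ x, HasStrictDerivAt F (g x) x := fun x => hgcont.integral_hasStrictDerivAt c x
  have hFcont : Continuous F :=
    Differentiable.continuous fun x => ((hFderiv x).hasDerivAt).differentiableAt
  have hFgrow : ∀ x y : ℝ, y ≤ x → F y + m * (x - y) ≤ F x := by
    intro x y hyx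
    have hsub : F y + ∫ s in y..x, g s = F x := by
      rw [hFdef]
      exact intervalIntegral.integral_add_adjacent_intervals (hgcont.intervalIntegrable c y)
        (hgcont.intervalIntegrable y x)
    have hlb : m * (x - y) ≤ ∫ s in y..x, g s := by
      have h2 := intervalIntegral.integral_mono_on hyx (intervalIntegrable_const : IntervalIntegrable (fun _ => m) volume y x)
        (hgcont.intervalIntegrable y x) (fun s _ => hmle s)
      simpa [smul_eq_mul, mul_comm] using h2
    linarith
  have hFmono : StrictMono F := by
    intro x y hxy
    have := hFgrow y x hxy.le
    nlinarith
  have hlin_top : Tendsto (fun x : ℝ => F 0 + m * x) atTop atTop :=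
    tendsto_atTop_add_const_left atTop (F 0) (Tendsto.const_mul_atTop hm0 tendsto_id)
  have hlin_bot : Tendsto (fun x : ℝ => F 0 + m * x) atBot atBot :=
    tendsto_atBot_add_const_left atBot (F 0) (Tendsto.const_mul_atBot hm0 tendsto_id)
  have htop : Tendsto F atTop atTop :=
    tendsto_atTop_mono' atTop
      (eventually_atTop.2 ⟨0, fun x hx => by have := hFgrow x 0 hx; linarith⟩) hlin_top
  have hbot : Tendsto F atBot atBot :=
    tendsto_atBot_mono' atBot
      (eventually_atBot.2 ⟨0, fun x hx => by have := hFgrow 0 x hx; linarith⟩) hlin_bot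
  have hFsurj : Function.Surjective F := hFcont.surjective htop hbot
  set I := StrictMono.orderIsoOfSurjective F hFmono hFsurj with hIdef
  set Finv : ℝ → ℝ := fun y => I.symm y with hFinvdef
  have hFinv_right : ∀ y, F (Finv y) = y := fun y =>
    StrictMono.orderIsoOfSurjective_self_symm_apply F hFmono hFsurj y
  have hFinv_left : ∀ x, Finv (F x) = x := fun x =>
    StrictMono.orderIsoOfSurjective_symm_apply_self F hFmono hFsurj x
  have hFinvcont : Continuous Finv := (OrderIso.continuous I.symm)
  have hFc : F c = 0 := by simp [hFdef]
  -- G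
  have hαη : Continuous fun τ => α τ + η τ := hα.add hη
  set G : ℝ → ℝ := fun t => Y * ∫ τ in (0:ℝ)..t, (α τ + η τ) with hGdef
  have hGderiv : ∀ t, HasStrictDerivAt G (Y * (α t + η t)) t := fun t =>
    (hαη.integral_hasStrictDerivAt 0 t).const_mul Y
  have hG0 : G 0 = 0 := by simp [hGdef]
  have hGnn : ∀ t, 0 ≤ t → 0 ≤ G t := by
    intro t ht
    refine mul_nonneg hY0.le (intervalIntegral.integral_nonneg ht fun τ hτ => ?_)
    have h1 := hαnn τ hτ.1
    have h2 := hηpos τ hτ.1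
    linarith
  have hFa : F a = ∫ s in c..a, (f s)⁻¹ := by
    rw [hFdef]
    apply intervalIntegral.integral_congr
    intro s hs
    rw [uIcc_of_le hca.le] at hs
    simp [hgdef, hφid s hs]
  have hGlt : ∀ t, 0 ≤ t → G t < F a := by
    intro t ht
    have h1 : ∫ τ in (0:ℝ)..t, (α τ + η τ) ≤ ∫ τ in Ioi (0:ℝ), (α τ + η τ) := by
      rw [intervalIntegral.integral_of_le ht]
      refine setIntegral_mono_set hint ?_ ?_
      · refine (ae_restrict_iff' measurableSet_Ioi).2 (ae_of_all _ fun τ hτ => ?_)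
        have h1 := hαnn τ (le_of_lt hτ)
        have h2 := hηpos τ (le_of_lt hτ)
        simp only [Pi.zero_apply]
        linarith
      · exact HasSubset.Subset.eventuallyLE Ioc_subset_Ioi_self
    calc G t ≤ Y * ∫ τ in Ioi (0:ℝ), (α τ + η τ) := mul_le_mul_of_nonneg_left h1 hY0.le
      _ < F a := hFa ▸ hsmall
  -- z
  set z : ℝ → ℝ := fun t => Finv (G t) / c with hzdef
  have hcz : ∀ t, c * z t = Finv (G t) := fun t => mul_div_cancel₀ _ hc0.ne'
  have hrange : ∀ t, 0 ≤ t → c ≤ Finv (G t) ∧ Finv (G t) < a := by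
    intro t ht
    constructor
    · calc c = Finv (F c) := (hFinv_left c).symm
        _ ≤ Finv (G t) := I.symm.monotone (by rw [hFc]; exact hGnn t ht)
    · calc Finv (G t) < Finv (F a) := I.symm.strictMono (hGlt t ht)
        _ = a := hFinv_left a
  refine ⟨z, ?_, ?_, ?_, ?_⟩
  · show Finv (G 0) / c = 1
    rw [hG0, ← hFc, hFinv_left]
    exact div_self hc0.ne'
  · intro t ht
    have hmem : c * z t ∈ Icc c a := by
      rw [hcz t]; exact ⟨(hrange t ht).1, ((hrange t ht).2).le⟩
    have hcongr : ∫ s in c..(c * z t), (f s)⁻¹ = ∫ s in c..(c * z t), g s := by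
      apply intervalIntegral.integral_congr
      intro s hs
      rw [uIcc_of_le hmem.1] at hs
      have hs' : s ∈ Icc c a := ⟨hs.1, le_trans hs.2 hmem.2⟩
      simp [hgdef, hφid s hs']
    rw [hcongr]
    show F (c * z t) = G t
    rw [hcz t, hFinv_right]
  · intro t ht
    have hFinvderiv : HasStrictDerivAt Finv ((g (Finv (G t)))⁻¹) (G t) :=
      HasStrictDerivAt.of_local_left_inverse hFinvcont.continuousAt (hFderiv (Finv (G t)))
        (hgpos _).ne' (Eventually.of_forall hFinv_right)
    have hcomp : HasStrictDerivAt (fun τ => Finv (G τ))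
        ((g (Finv (G t)))⁻¹ * (Y * (α t + η t))) t := hFinvderiv.comp t (hGderiv t)
    have hzderiv : HasDerivAt z ((g (Finv (G t)))⁻¹ * (Y * (α t + η t)) / c) t :=
      (hcomp.div_const c).hasDerivAt
    have hg1 : g (Finv (G t)) = (f (c * z t))⁻¹ := by
      have hmem : Finv (G t) ∈ Icc c a := ⟨(hrange t ht).1, ((hrange t ht).2).le⟩
      rw [hcz t]
      simp [hgdef, hφid _ hmem]
    have hfpos' : 0 < f (c * z t) := by
      apply hfpos
      rw [hcz t]
      exact ⟨lt_of_lt_of_le hc0 (hrange t ht).1, ((hrange t ht).2).le⟩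
    convert hzderiv using 1
    rw [hg1, inv_inv]
    field_simp
    ring
  · intro t ht
    constructor
    · rw [hzdef]
      show 1 ≤ Finv (G t) / c
      rw [le_div_iff₀ hc0, one_mul]
      exact (hrange t ht).1
    · rw [hcz t]
      exact (hrange t ht).2
end
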